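/- arXiv:2103.07996 — 2 statements merged into one kernel-verified Lean document; each statement's English description precedes it below -/
import Mathlib

section
/- Let Σ and H be 3×3 real symmetric positive-definite matrices and t ∈ ℝ. Set A = ½(Σ + t²·HΣ⁻¹H) and B = ½Σ⁻¹, and let ρ_A(x) = ((2π)³ det A)^{-1/2} exp(−½ ⟨x, A⁻¹x⟩) and ρ_B(k) = ((2π)³ det B)^{-1/2} exp(−½ ⟨k, B⁻¹k⟩) be the centered Gaussian probability densities on ℝ³ with covariance matrices A and B. Then −∫ ρ_A ln ρ_A − ∫ ρ_B ln ρ_B = 3(1 + ln π) + ½ ln det(I + t²·(Σ⁻¹H)²); in particular this sum is at least 3(1 + ln π), with equality exactly at t = 0. -/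
open MeasureTheory Real Matrix Set

lemma integrable_sq_exp {b : ℝ} (hb : 0 < b) :
    Integrable (fun x : ℝ => x ^ 2 * Real.exp (-b * x ^ 2)) := by
  have := integrable_rpow_mul_exp_neg_mul_sq hb (s := 2) (by norm_num)
  simpa [Real.rpow_natCast] using this

lemma integral_sq_exp {b : ℝ} (hb : 0 < b) :
    ∫ x : ℝ, x ^ 2 * Real.exp (-b * x ^ 2) = (1 / (2 * b)) * √(π / b) := by
  have hIoi : ∫ x in Ioi (0:ℝ), (x ^ 2 * Real.exp (-b * x ^ 2)
      - (1 / (2 * b)) * Real.exp (-b * x ^ 2)) = 0 := by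
    have hF : ∀ x ∈ Ioi (0:ℝ), HasDerivAt (fun x : ℝ => -(x / (2 * b)) * Real.exp (-b * x ^ 2))
        (x ^ 2 * Real.exp (-b * x ^ 2) - (1 / (2 * b)) * Real.exp (-b * x ^ 2)) x := by
      intro x _
      have h1 : HasDerivAt (fun x : ℝ => -(x / (2 * b))) (-(1 / (2 * b))) x := by
        simpa using ((hasDerivAt_id x).div_const (2*b)).fun_neg
      have h2 : HasDerivAt (fun x : ℝ => Real.exp (-b * x ^ 2))
          (Real.exp (-b * x ^ 2) * (-b * (2 * x))) x := by
        have : HasDerivAt (fun x : ℝ => -b * x ^ 2) (-b * (2 * x)) x := by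
          simpa using ((hasDerivAt_pow 2 x).const_mul (-b))
        exact this.exp
      have := h1.fun_mul h2
      refine this.congr_deriv ?_
      field_simp
      ring
    have hint : IntegrableOn (fun x : ℝ => x ^ 2 * Real.exp (-b * x ^ 2)
        - (1 / (2 * b)) * Real.exp (-b * x ^ 2)) (Ioi 0) := by
      exact ((integrable_sq_exp hb).sub ((integrable_exp_neg_mul_sq hb).const_mul _)).integrableOn
    have htend : Filter.Tendsto (fun x : ℝ => -(x / (2 * b)) * Real.exp (-b * x ^ 2))
        Filter.atTop (nhds 0) := by
      have h := rpow_mul_exp_neg_mul_sq_isLittleO_exp_neg hb 1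
      have h2 : Filter.Tendsto (fun x : ℝ => Real.exp (-(1/2) * x)) Filter.atTop (nhds 0) := by
        simpa using Real.tendsto_exp_comp_nhds_zero.mpr
          (Filter.Tendsto.const_mul_atTop_of_neg (by norm_num : -(1/2 : ℝ) < 0) Filter.tendsto_id)
      have h3 : Filter.Tendsto (fun x : ℝ => x ^ (1:ℝ) * Real.exp (-b * x ^ 2))
          Filter.atTop (nhds 0) := h.isBigO.trans_tendsto h2
      have h4 : Filter.Tendsto (fun x : ℝ => x * Real.exp (-b * x ^ 2))
          Filter.atTop (nhds 0) := by
        refine h3.congr' ?_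
        filter_upwards [Filter.eventually_ge_atTop (0:ℝ)] with x hx
        rw [Real.rpow_one]
      have h5 := h4.const_mul (-(1 / (2*b)))
      rw [mul_zero] at h5
      refine h5.congr fun x => ?_
      ring
    have := integral_Ioi_of_hasDerivAt_of_tendsto (Continuous.continuousWithinAt (by continuity)) hF hint htend
    simpa using this
  have hsub := integral_sub ((integrable_sq_exp hb).integrableOn (s := Ioi 0))
    (((integrable_exp_neg_mul_sq hb).const_mul (1/(2*b))).integrableOn (s := Ioi 0))
  rw [hsub] at hIoi
  have hIoi2 : ∫ x in Ioi (0:ℝ), x ^ 2 * Real.exp (-b * x ^ 2)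
      = (1 / (2 * b)) * (√(π / b) / 2) := by
    rw [sub_eq_zero] at hIoi
    rw [hIoi, integral_const_mul, integral_gaussian_Ioi]
  have habs : ∫ x : ℝ, x ^ 2 * Real.exp (-b * x ^ 2)
      = 2 * ∫ x in Ioi (0:ℝ), x ^ 2 * Real.exp (-b * x ^ 2) := by
    rw [← integral_comp_abs (f := fun x : ℝ => x ^ 2 * Real.exp (-b * x ^ 2))]
    congr 1
    ext x
    rw [sq_abs]
  rw [habs, hIoi2]
  ring

section Aux
variable {ι : Type*} [Fintype ι] [DecidableEq ι]



-- the eigenvector matrix of a positive definite real matrix, as a volume-preserving map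
lemma unitary_measurePreserving (V : Matrix ι ι ℝ) (hV : V ∈ Matrix.unitaryGroup ι ℝ) :
    MeasurePreserving (Matrix.toLin' V) volume volume := by
  have hdet : V.det * V.det = 1 := by
    have h1 : V * star V = 1 := (Matrix.mem_unitaryGroup_iff).mp hV
    have := congrArg Matrix.det h1
    rwa [Matrix.det_mul, Matrix.star_eq_conjTranspose, Matrix.det_conjTranspose, star_trivial,
      Matrix.det_one] at this
  have hdet1 : |V.det| = 1 := by
    rcases mul_self_eq_one_iff.mp hdet with h | h <;> simp [h]
  have hdetne : V.det ≠ 0 := by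
    intro h; rw [h] at hdet1; simp at hdet1
  refine ⟨(Matrix.toLin' V).continuous_of_finiteDimensional.measurable, ?_⟩
  rw [Real.map_matrix_volume_pi_eq_smul_volume_pi hdetne]
  rw [abs_inv, hdet1]
  simp

lemma unitary_measurableEmbedding (V : Matrix ι ι ℝ) (hV : V ∈ Matrix.unitaryGroup ι ℝ) :
    MeasurableEmbedding (Matrix.toLin' V) := by
  have hdet : IsUnit V.det := by
    have h1 : V * star V = 1 := (Matrix.mem_unitaryGroup_iff).mp hV
    have := congrArg Matrix.det h1
    rw [Matrix.det_mul, Matrix.det_one] at this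
    exact IsUnit.of_mul_eq_one _ this
  have : Invertible V := V.invertibleOfIsUnitDet hdet
  let e : (ι → ℝ) ≃ₗ[ℝ] (ι → ℝ) := V.toLinearEquiv' this
  have he : ⇑(Matrix.toLin' V) = ⇑e := rfl
  rw [he]
  exact e.toContinuousLinearEquiv.toHomeomorph.measurableEmbedding



lemma qform_eig (P : Matrix ι ι ℝ) (hP : P.PosDef) (y : ι → ℝ) :
    (hP.1.eigenvectorUnitary.1 *ᵥ y) ⬝ᵥ P *ᵥ (hP.1.eigenvectorUnitary.1 *ᵥ y)
      = ∑ i, hP.1.eigenvalues i * y i ^ 2 := by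
  set V : Matrix ι ι ℝ := hP.1.eigenvectorUnitary.1 with hVdef
  set d := hP.1.eigenvalues with hddef
  have hdiag : star V * P * V = Matrix.diagonal d := by
    have := hP.1.conjStarAlgAut_star_eigenvectorUnitary
    simpa using this
  have hsv : y ᵥ* star V = V *ᵥ y := by
    have := Matrix.star_mulVec (M := V) (v := y)
    simp only [star_trivial] at this
    rw [Matrix.star_eq_conjTranspose]
    exact this.symm
  have : y ⬝ᵥ ((star V * P * V) *ᵥ y) = (V *ᵥ y) ⬝ᵥ P *ᵥ (V *ᵥ y) := by
    rw [Matrix.dotProduct_mulVec, ← Matrix.vecMul_vecMul, ← Matrix.vecMul_vecMul, hsv,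
      ← Matrix.dotProduct_mulVec, ← Matrix.dotProduct_mulVec]
  rw [← this, hdiag]
  simp only [dotProduct, Matrix.mulVec_diagonal]
  exact Finset.sum_congr rfl fun i _ => by ring
end Aux

set_option maxHeartbeats 1000000 in
lemma gaussian_entropy (A : Matrix (Fin 3) (Fin 3) ℝ) (hA : A.PosDef) :
    (-∫ x : Fin 3 → ℝ, (((2 * π) ^ 3 * A.det) ^ (-(1:ℝ)/2) *
        Real.exp (-(1/2) * dotProduct x (A⁻¹.mulVec x))) *
      Real.log (((2 * π) ^ 3 * A.det) ^ (-(1:ℝ)/2) *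
        Real.exp (-(1/2) * dotProduct x (A⁻¹.mulVec x)))) =
    3/2 + (1/2) * Real.log ((2 * π) ^ 3 * A.det) := by
  have hP : (A⁻¹).PosDef := hA.inv
  set P : Matrix (Fin 3) (Fin 3) ℝ := A⁻¹ with hPdef
  set V : Matrix (Fin 3) (Fin 3) ℝ := hP.1.eigenvectorUnitary.1 with hVdef
  set d := hP.1.eigenvalues with hddef
  have hd : ∀ i, 0 < d i := hP.eigenvalues_pos
  have MP := unitary_measurePreserving V hP.1.eigenvectorUnitary.2
  have MEmb := unitary_measurableEmbedding V hP.1.eigenvectorUnitary.2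
  have hcov : ∀ g : (Fin 3 → ℝ) → ℝ, ∫ x, g x = ∫ y, g (V *ᵥ y) := by
    intro g
    rw [← MP.integral_comp MEmb g]
    simp [Matrix.toLin'_apply]
  have hicov : ∀ g : (Fin 3 → ℝ) → ℝ, Integrable (fun y => g (V *ᵥ y)) → Integrable g := by
    intro g hg
    exact (MP.integrable_comp_emb MEmb).mp hg
  set q : (Fin 3 → ℝ) → ℝ := fun x => dotProduct x (P.mulVec x) with hqdef
  set E : (Fin 3 → ℝ) → ℝ := fun x => Real.exp (-(1/2) * q x) with hEdef
  have hq : ∀ y, q (V *ᵥ y) = ∑ i, d i * y i ^ 2 := fun y => qform_eig P hP y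
  -- 1D functions
  set e : Fin 3 → ℝ → ℝ := fun i t => Real.exp (-(d i / 2) * t ^ 2) with hedef
  have hie : ∀ i, Integrable (e i) := fun i => integrable_exp_neg_mul_sq (div_pos (hd i) two_pos)
  have hEy : ∀ y, E (V *ᵥ y) = ∏ i, e i (y i) := by
    intro y
    rw [hEdef]
    simp only [hq]
    rw [← Real.exp_sum]
    congr 1
    rw [Finset.mul_sum]
    exact Finset.sum_congr rfl fun i _ => by ring
  -- value of the basic product integral
  set J : ℝ := ∏ i, √(π / (d i / 2)) with hJdef
  have hIe : ∀ i, ∫ t : ℝ, e i t = √(π / (d i / 2)) := fun i => integral_gaussian _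
  have hI0 : ∫ x, E x = J := by
    rw [hcov E]
    simp only [hEy]
    rw [MeasureTheory.integral_fintype_prod_volume_eq_prod (f := e)]
    exact Finset.prod_congr rfl fun i _ => hIe i
  have hEint : Integrable E := by
    refine hicov E ?_
    have : Integrable (fun y : Fin 3 → ℝ => ∏ i, e i (y i)) :=
      MeasureTheory.Integrable.fintype_prod (𝕜 := ℝ) hie
    exact this.congr (by filter_upwards with y using (hEy y).symm)
  -- the per-index product functions for the second moment
  set F : Fin 3 → Fin 3 → ℝ → ℝ :=
    fun i j => if j = i then (fun t => d i * (t ^ 2 * e i t)) else e j with hFdef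
  have hiF : ∀ i j, Integrable (F i j) := by
    intro i j
    rw [hFdef]
    by_cases h : j = i
    · simp only [h, if_pos rfl]
      have : Integrable (fun t : ℝ => t ^ 2 * Real.exp (-(d i / 2) * t ^ 2)) :=
        integrable_sq_exp (div_pos (hd i) two_pos)
      simpa [hedef] using this.const_mul (d i)
    · simpa [if_neg h] using hie j
  have hqE : ∀ y, q (V *ᵥ y) * E (V *ᵥ y) = ∑ i, ∏ j, F i j (y j) := by
    intro y
    rw [hq, hEy, Finset.sum_mul]
    refine Finset.sum_congr rfl fun i _ => ?_
    have h1 : ∏ j, F i j (y j) =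
        F i i (y i) * ∏ j ∈ Finset.univ.erase i, F i j (y j) :=
      (Finset.mul_prod_erase Finset.univ _ (Finset.mem_univ i)).symm
    have h2 : ∏ j, e j (y j) = e i (y i) * ∏ j ∈ Finset.univ.erase i, e j (y j) :=
      (Finset.mul_prod_erase Finset.univ _ (Finset.mem_univ i)).symm
    have h3 : ∏ j ∈ Finset.univ.erase i, F i j (y j) =
        ∏ j ∈ Finset.univ.erase i, e j (y j) := by
      refine Finset.prod_congr rfl fun j hj => ?_
      rw [hFdef]
      simp [Finset.ne_of_mem_erase hj]
    rw [h1, h3, h2]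
    simp only [hFdef, eq_self_iff_true, if_true]
    ring
  have hintFi : ∀ i, Integrable (fun y : Fin 3 → ℝ => ∏ j, F i j (y j)) :=
    fun i => MeasureTheory.Integrable.fintype_prod (𝕜 := ℝ) (hiF i)
  have hIFi : ∀ i, ∫ y : Fin 3 → ℝ, ∏ j, F i j (y j) = J := by
    intro i
    rw [MeasureTheory.integral_fintype_prod_volume_eq_prod (f := F i)]
    have h1 : ∏ j, ∫ t : ℝ, F i j t =
        (∫ t : ℝ, F i i t) * ∏ j ∈ Finset.univ.erase i, ∫ t : ℝ, F i j t :=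
      (Finset.mul_prod_erase Finset.univ _ (Finset.mem_univ i)).symm
    have hFii : ∫ t : ℝ, F i i t = √(π / (d i / 2)) := by
      simp only [hFdef, eq_self_iff_true, if_true]
      rw [integral_const_mul, hedef,
        integral_sq_exp (div_pos (hd i) two_pos)]
      have hne : d i ≠ 0 := (hd i).ne'
      field_simp
    rw [h1, hFii, hJdef]
    rw [← Finset.mul_prod_erase Finset.univ _ (Finset.mem_univ i)]
    congr 1
    refine Finset.prod_congr rfl fun j hj => ?_
    rw [hFdef]
    simp only [Finset.ne_of_mem_erase hj, if_neg]
    exact hIe j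
  have hI2 : ∫ x, q x * E x = 3 * J := by
    rw [hcov (fun x => q x * E x)]
    calc ∫ y : Fin 3 → ℝ, q (V *ᵥ y) * E (V *ᵥ y)
          = ∫ y : Fin 3 → ℝ, ∑ i, ∏ j, F i j (y j) := by
          congr 1; ext y; exact hqE y
      _ = ∑ i, ∫ y : Fin 3 → ℝ, ∏ j, F i j (y j) :=
          integral_finset_sum _ (fun i _ => hintFi i)
      _ = ∑ _i : Fin 3, J := Finset.sum_congr rfl fun i _ => hIFi i
      _ = 3 * J := by
          rw [Finset.sum_const, Finset.card_univ, Fintype.card_fin]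
          norm_num
  have hqEint : Integrable (fun x => q x * E x) := by
    refine hicov _ ?_
    have : Integrable (fun y : Fin 3 → ℝ => ∑ i, ∏ j, F i j (y j)) :=
      MeasureTheory.integrable_finset_sum _ (fun i _ => hintFi i)
    exact this.congr (by filter_upwards with y using (hqE y).symm)
  -- normalizing constant
  have hdetA : (0:ℝ) < A.det := hA.det_pos
  have h2pi : (0:ℝ) < (2 * π) ^ 3 := by positivity
  have hCpos : (0:ℝ) < ((2 * π) ^ 3 * A.det) ^ (-(1:ℝ)/2) :=
    Real.rpow_pos_of_pos (by positivity) _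
  set C : ℝ := ((2 * π) ^ 3 * A.det) ^ (-(1:ℝ)/2) with hCdef
  -- C * J = 1
  have hdetP : P.det = ∏ i, d i := by
    have := hP.1.det_eq_prod_eigenvalues
    simpa using this
  have hdetPA : P.det = A.det⁻¹ := by
    rw [hPdef, Matrix.det_nonsing_inv, Ring.inverse_eq_inv]
  have hprodform : (2 * π) ^ 3 * A.det = ∏ i : Fin 3, (π / (d i / 2)) := by
    have hAdet : A.det = (∏ i, d i)⁻¹ := by
      rw [← hdetP, hdetPA, inv_inv]
    have heach : ∀ i : Fin 3, π / (d i / 2) = 2 * π / d i := by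
      intro i
      field_simp
    rw [hAdet]
    calc (2 * π) ^ 3 * (∏ i, d i)⁻¹
        = (∏ _i : Fin 3, 2 * π) * ∏ i, (d i)⁻¹ := by
          rw [Finset.prod_const, Finset.card_univ, Fintype.card_fin, ← Finset.prod_inv_distrib]
      _ = ∏ i : Fin 3, (2 * π) * (d i)⁻¹ := by rw [← Finset.prod_mul_distrib]
      _ = ∏ i : Fin 3, (π / (d i / 2)) := by
          refine Finset.prod_congr rfl fun i _ => ?_
          rw [heach i]
          ring
  have hprodpos : (0:ℝ) < ∏ i : Fin 3, (π / (d i / 2)) := by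
    refine Finset.prod_pos fun i _ => ?_
    have := hd i
    positivity
  have hJval : J = (∏ i : Fin 3, (π / (d i / 2))) ^ ((1:ℝ)/2) := by
    rw [hJdef, ← Real.finset_prod_rpow _ _ (fun i _ => by have := hd i; positivity)]
    refine Finset.prod_congr rfl fun i _ => ?_
    rw [Real.sqrt_eq_rpow]
  have hCJ : C * J = 1 := by
    rw [hCdef, hJval, hprodform, ← Real.rpow_add hprodpos]
    norm_num
  have hJpos : 0 < J := by
    rw [hJval]
    exact Real.rpow_pos_of_pos hprodpos _
  -- final computation
  have hρlog : ∀ x : Fin 3 → ℝ,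
      (C * E x) * Real.log (C * E x) =
        (C * Real.log C) * E x + (-(1/2) * C) * (q x * E x) := by
    intro x
    have hlog : Real.log (C * E x) = Real.log C + (-(1/2) * q x) := by
      rw [hEdef]
      rw [Real.log_mul hCpos.ne' (Real.exp_ne_zero _), Real.log_exp]
    rw [hlog]
    ring
  have hintval : ∫ x : Fin 3 → ℝ, (C * E x) * Real.log (C * E x)
      = (C * Real.log C) * J + (-(1/2) * C) * (3 * J) := by
    calc ∫ x : Fin 3 → ℝ, (C * E x) * Real.log (C * E x)
        = ∫ x : Fin 3 → ℝ,
            ((C * Real.log C) * E x + (-(1/2) * C) * (q x * E x)) := by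
          congr 1; ext x; exact hρlog x
      _ = (C * Real.log C) * (∫ x, E x) + (-(1/2) * C) * (∫ x, q x * E x) := by
          rw [integral_add (hEint.const_mul _) (hqEint.const_mul _),
            integral_const_mul, integral_const_mul]
      _ = (C * Real.log C) * J + (-(1/2) * C) * (3 * J) := by rw [hI0, hI2]
  have hgoal : ∫ x : Fin 3 → ℝ, (((2 * π) ^ 3 * A.det) ^ (-(1:ℝ)/2) *
        Real.exp (-(1/2) * dotProduct x (A⁻¹.mulVec x))) *
      Real.log (((2 * π) ^ 3 * A.det) ^ (-(1:ℝ)/2) *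
        Real.exp (-(1/2) * dotProduct x (A⁻¹.mulVec x)))
      = ∫ x : Fin 3 → ℝ, (C * E x) * Real.log (C * E x) := rfl
  rw [hgoal, hintval]
  have hlogC : Real.log C = (-(1:ℝ)/2) * Real.log ((2 * π) ^ 3 * A.det) := by
    rw [hCdef, Real.log_rpow (by positivity)]
  have h1 : C * Real.log C * J = Real.log C := by
    have : C * Real.log C * J = (C * J) * Real.log C := by ring
    rw [this, hCJ, one_mul]
  have h2 : -(1/2) * C * (3 * J) = -(3/2) * (C * J) := by ring
  rw [h1, h2, hCJ, hlogC]
  ring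


lemma posSemidef_sq_smul {n : Type*} [Fintype n] [DecidableEq n]
    {M : Matrix n n ℝ} (hM : M.PosSemidef) (t : ℝ) : (t ^ 2 • M).PosSemidef := by
  refine ⟨?_, fun x => ?_⟩
  · unfold Matrix.IsHermitian
    rw [Matrix.conjTranspose_smul, hM.1.eq]
    simp
  · exact (hM.smul (sq_nonneg t)).2 x

lemma posDef_half_smul {n : Type*} [Fintype n] [DecidableEq n]
    {M : Matrix n n ℝ} (hM : M.PosDef) : ((1/2 : ℝ) • M).PosDef := by
  refine ⟨?_, fun x hx => ?_⟩
  · unfold Matrix.IsHermitian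
    rw [Matrix.conjTranspose_smul, hM.1.eq]
    simp
  · exact (hM.smul (by norm_num : (0:ℝ) < 1/2)).2 hx

open scoped MatrixOrder in
/-- The determinant `det(1 + t² (S⁻¹H)²)` is a product of factors `1 + t² μᵢ` with `μᵢ > 0`. -/
lemma det_one_add_eigen (S H : Matrix (Fin 3) (Fin 3) ℝ) (hS : S.PosDef) (hH : H.PosDef)
    (t : ℝ) : ∃ μ : Fin 3 → ℝ, (∀ i, 0 < μ i) ∧
      (1 + t ^ 2 • ((S⁻¹ * H) * (S⁻¹ * H))).det = ∏ i, (1 + t ^ 2 * μ i) := by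
  set R : Matrix (Fin 3) (Fin 3) ℝ := CFC.sqrt S with hRdef
  have hRps : R.PosSemidef := (CFC.sqrt_nonneg S).posSemidef
  have hRR : R * R = S := CFC.sqrt_mul_sqrt_self S hS.posSemidef.nonneg
  have hdetS : (0:ℝ) < S.det := hS.det_pos
  have hdetR : R.det ≠ 0 := by
    intro h
    have : R.det * R.det = S.det := by rw [← Matrix.det_mul, hRR]
    rw [h] at this
    simp at this
    exact hdetS.ne' this.symm
  have hRunit : IsUnit R.det := hdetR.isUnit
  have hRinvR : R⁻¹ * R = 1 := Matrix.nonsing_inv_mul R hRunit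
  have hRRinv : R * R⁻¹ = 1 := Matrix.mul_nonsing_inv R hRunit
  have hSinv : S⁻¹ = R⁻¹ * R⁻¹ := by rw [← hRR, Matrix.mul_inv_rev]
  set K : Matrix (Fin 3) (Fin 3) ℝ := R⁻¹ * H * R⁻¹ with hKdef
  have hRinvH : R⁻¹.IsHermitian := hRps.1.inv
  have hKH : Kᴴ = K := by
    rw [hKdef, Matrix.conjTranspose_mul, Matrix.conjTranspose_mul, hRinvH.eq, hH.1.eq,
      Matrix.mul_assoc]
  have hconj : (1 : Matrix (Fin 3) (Fin 3) ℝ) + t ^ 2 • ((S⁻¹ * H) * (S⁻¹ * H))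
      = R⁻¹ * (1 + t ^ 2 • (K * K)) * R := by
    rw [Matrix.mul_add, Matrix.add_mul, Matrix.mul_one, hRinvR, Matrix.mul_smul,
      Matrix.smul_mul]
    congr 1
    rw [hKdef, hSinv]
    congr 1
    symm
    calc R⁻¹ * (R⁻¹ * H * R⁻¹ * (R⁻¹ * H * R⁻¹)) * R
        = R⁻¹ * R⁻¹ * H * (R⁻¹ * R⁻¹ * H) * (R⁻¹ * R) := by
          simp only [Matrix.mul_assoc]
      _ = R⁻¹ * R⁻¹ * H * (R⁻¹ * R⁻¹ * H) := by rw [hRinvR, Matrix.mul_one]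
  set N : Matrix (Fin 3) (Fin 3) ℝ := K * K with hNdef
  have hNps : N.PosSemidef := by
    have := Matrix.posSemidef_conjTranspose_mul_self K
    rwa [hKH] at this
  set μ := hNps.1.eigenvalues with hμdef
  have hμ0 : ∀ i, 0 ≤ μ i := hNps.eigenvalues_nonneg
  have hdetN : N.det = ∏ i, μ i := by
    have := hNps.1.det_eq_prod_eigenvalues
    simpa using this
  have hdetNne : N.det ≠ 0 := by
    have hdetK : K.det ≠ 0 := by
      rw [hKdef, Matrix.det_mul, Matrix.det_mul]
      have h1 : R⁻¹.det ≠ 0 := by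
        rw [Matrix.det_nonsing_inv, Ring.inverse_eq_inv]
        exact inv_ne_zero hdetR
      have h2 : H.det ≠ 0 := hH.det_pos.ne'
      positivity
    rw [hNdef, Matrix.det_mul]
    exact mul_ne_zero hdetK hdetK
  have hμpos : ∀ i, 0 < μ i := by
    intro i
    rcases lt_or_eq_of_le (hμ0 i) with h | h
    · exact h
    · exfalso
      apply hdetNne
      rw [hdetN]
      exact Finset.prod_eq_zero (Finset.mem_univ i) h.symm
  refine ⟨μ, hμpos, ?_⟩
  -- spectral decomposition of 1 + t² N
  set U : Matrix (Fin 3) (Fin 3) ℝ := hNps.1.eigenvectorUnitary.1 with hUdef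
  have hUU : U * star U = 1 := (Matrix.mem_unitaryGroup_iff).mp hNps.1.eigenvectorUnitary.2
  have hspec : N = U * Matrix.diagonal μ * star U := by
    have := hNps.1.spectral_theorem
    simpa using this
  have hX : (1 : Matrix (Fin 3) (Fin 3) ℝ) + t ^ 2 • N
      = U * Matrix.diagonal (fun i => 1 + t ^ 2 * μ i) * star U := by
    have hdiag : Matrix.diagonal (fun i : Fin 3 => 1 + t ^ 2 * μ i)
        = 1 + t ^ 2 • Matrix.diagonal μ := by
      ext i j
      rcases eq_or_ne i j with h | h
      · subst h
        simp [Matrix.diagonal_apply_eq, Matrix.one_apply_eq]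
      · simp [Matrix.diagonal_apply_ne _ h, Matrix.one_apply_ne h]
    rw [hdiag, Matrix.mul_add, Matrix.add_mul, Matrix.mul_one, hUU, Matrix.mul_smul,
      Matrix.smul_mul, hspec]
  have hdetU : U.det * (star U).det = 1 := by
    rw [← Matrix.det_mul, hUU, Matrix.det_one]
  calc (1 + t ^ 2 • ((S⁻¹ * H) * (S⁻¹ * H))).det
      = (R⁻¹ * (1 + t ^ 2 • N) * R).det := by rw [hconj, hNdef]
    _ = R⁻¹.det * (1 + t ^ 2 • N).det * R.det := by
        rw [Matrix.det_mul, Matrix.det_mul]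
    _ = (1 + t ^ 2 • N).det * (R⁻¹.det * R.det) := by ring
    _ = (1 + t ^ 2 • N).det := by
        rw [← Matrix.det_mul, hRinvR, Matrix.det_one, mul_one]
    _ = ∏ i, (1 + t ^ 2 * μ i) := by
        rw [hX, Matrix.det_mul, Matrix.det_mul]
        rw [Matrix.det_diagonal]
        calc U.det * (∏ i, (1 + t ^ 2 * μ i)) * (star U).det
            = (∏ i, (1 + t ^ 2 * μ i)) * (U.det * (star U).det) := by ring
          _ = ∏ i, (1 + t ^ 2 * μ i) := by rw [hdetU, mul_one]


set_option maxHeartbeats 1000000 in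
/-- The entropy of a coherent state evolved for time `t`: the sum of the differential
entropies of the centered Gaussians with covariances `½(Σ + t²HΣ⁻¹H)` and `½Σ⁻¹`
equals `3(1 + ln π) + ½ ln det(I + t²(Σ⁻¹H)²)`, is at least `3(1 + ln π)`,
with equality exactly at `t = 0`. -/
theorem coherent_state_entropy
    (S H : Matrix (Fin 3) (Fin 3) ℝ) (hS : S.PosDef) (hH : H.PosDef)
    (t : ℝ) (A B : Matrix (Fin 3) (Fin 3) ℝ)
    (hA : A = (1 / 2 : ℝ) • (S + t ^ 2 • (H * S⁻¹ * H)))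
    (hB : B = (1 / 2 : ℝ) • S⁻¹)
    (ρA ρB : (Fin 3 → ℝ) → ℝ)
    (hρA : ∀ x, ρA x = ((2 * π) ^ 3 * A.det) ^ (-(1 : ℝ) / 2) *
        Real.exp (-(1 / 2) * dotProduct x (A⁻¹.mulVec x)))
    (hρB : ∀ k, ρB k = ((2 * π) ^ 3 * B.det) ^ (-(1 : ℝ) / 2) *
        Real.exp (-(1 / 2) * dotProduct k (B⁻¹.mulVec k))) :
    ((-∫ x, ρA x * Real.log (ρA x)) + (-∫ k, ρB k * Real.log (ρB k)) =
      3 * (1 + Real.log π) +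
        (1 / 2) * Real.log (1 + t ^ 2 • ((S⁻¹ * H) * (S⁻¹ * H))).det) ∧
    (3 * (1 + Real.log π) ≤
      (-∫ x, ρA x * Real.log (ρA x)) + (-∫ k, ρB k * Real.log (ρB k))) ∧
    ((-∫ x, ρA x * Real.log (ρA x)) + (-∫ k, ρB k * Real.log (ρB k)) =
        3 * (1 + Real.log π) ↔ t = 0) := by
  -- positive definiteness of the covariance matrices
  have hHS : (H * S⁻¹ * H).PosSemidef := by
    have := (hS.inv.posSemidef).conjTranspose_mul_mul_same H
    rwa [hH.1.eq] at this
  have hSsum : (S + t ^ 2 • (H * S⁻¹ * H)).PosDef :=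
    hS.add_posSemidef (posSemidef_sq_smul hHS t)
  have hApd : A.PosDef := by rw [hA]; exact posDef_half_smul hSsum
  have hBpd : B.PosDef := by rw [hB]; exact posDef_half_smul hS.inv
  have e1 := gaussian_entropy A hApd
  have e2 := gaussian_entropy B hBpd
  -- determinant identities
  obtain ⟨μ, hμpos, hdet⟩ := det_one_add_eigen S H hS hH t
  set Ddet : ℝ := (1 + t ^ 2 • ((S⁻¹ * H) * (S⁻¹ * H))).det with hDdef
  have hD1 : 1 ≤ Ddet := by
    rw [hdet]
    have h0 : (1:ℝ) = ∏ _i : Fin 3, (1:ℝ) := by simp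
    rw [h0]
    refine Finset.prod_le_prod (fun i _ => by norm_num) (fun i _ => ?_)
    nlinarith [hμpos i, sq_nonneg t]
  have hDpos : 0 < Ddet := lt_of_lt_of_le one_pos hD1
  have hDt0 : t = 0 → Ddet = 1 := by
    intro h
    rw [hdet, h]
    simp
  have hDt : t ≠ 0 → 1 < Ddet := by
    intro ht
    have ht2 : 0 < t ^ 2 := by positivity
    rw [hdet]
    have h0 : (1:ℝ) = ∏ _i : Fin 3, (1:ℝ) := by simp
    rw [h0]
    refine Finset.prod_lt_prod_of_nonempty (fun i _ => one_pos) (fun i _ => ?_)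
      Finset.univ_nonempty
    nlinarith [hμpos i]
  -- relation between the determinants
  have hdetSpos : (0:ℝ) < S.det := hS.det_pos
  have hSD : S * (1 + t ^ 2 • ((S⁻¹ * H) * (S⁻¹ * H))) = S + t ^ 2 • (H * S⁻¹ * H) := by
    rw [Matrix.mul_add, Matrix.mul_one, Matrix.mul_smul]
    congr 1
    congr 1
    have hSS : S * S⁻¹ = 1 := Matrix.mul_nonsing_inv S hdetSpos.ne'.isUnit
    calc S * (S⁻¹ * H * (S⁻¹ * H))
        = (S * S⁻¹) * H * S⁻¹ * H := by simp only [Matrix.mul_assoc]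
      _ = H * S⁻¹ * H := by rw [hSS, Matrix.one_mul]
  have hdetrel : S.det * Ddet = (S + t ^ 2 • (H * S⁻¹ * H)).det := by
    have := congrArg Matrix.det hSD
    rwa [Matrix.det_mul] at this
  have hAdet : A.det = (1/8) * (S + t ^ 2 • (H * S⁻¹ * H)).det := by
    rw [hA, Matrix.det_smul]
    norm_num
  have hBdet : B.det = (1/8) * S.det⁻¹ := by
    rw [hB, Matrix.det_smul, Matrix.det_nonsing_inv, Ring.inverse_eq_inv]
    norm_num
  have hprod : A.det * B.det = (1/64) * Ddet := by
    rw [hAdet, hBdet, ← hdetrel]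
    field_simp
    ring
  -- combine
  have hpA : (0:ℝ) < (2 * π) ^ 3 * A.det := by
    have := hApd.det_pos
    positivity
  have hpB : (0:ℝ) < (2 * π) ^ 3 * B.det := by
    have := hBpd.det_pos
    positivity
  have hx : ((2 * π) ^ 3 * A.det) * ((2 * π) ^ 3 * B.det) = π ^ 6 * Ddet := by
    calc ((2 * π) ^ 3 * A.det) * ((2 * π) ^ 3 * B.det)
        = (2 * π) ^ 6 * (A.det * B.det) := by ring
      _ = (2 * π) ^ 6 * ((1/64) * Ddet) := by rw [hprod]
      _ = π ^ 6 * Ddet := by ring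
  have hlogsum : Real.log ((2 * π) ^ 3 * A.det) + Real.log ((2 * π) ^ 3 * B.det)
      = 6 * Real.log π + Real.log Ddet := by
    rw [← Real.log_mul hpA.ne' hpB.ne', hx,
      Real.log_mul (by positivity) hDpos.ne', Real.log_pow]
    norm_num
  have Hsum : (3/2 + (1/2) * Real.log ((2 * π) ^ 3 * A.det))
      + (3/2 + (1/2) * Real.log ((2 * π) ^ 3 * B.det))
      = 3 * (1 + Real.log π) + (1/2) * Real.log Ddet := by
    have := hlogsum
    nlinarith [hlogsum]
  simp only [hρA, hρB]
  rw [e1, e2, Hsum]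
  refine ⟨rfl, ?_, ?_⟩
  · have := Real.log_nonneg hD1
    linarith
  · constructor
    · intro h
      by_contra ht
      have h2 := Real.log_pos (hDt ht)
      linarith
    · intro h
      rw [hDt0 h, Real.log_one]
      ring
end

section
/- Let a₀ > 0 and define ρ : ℝ³ → ℝ by ρ(x) = (1/(π a₀³)) e^{-2‖x‖/a₀} (Euclidean norm). Then ρ is a probability density, ∫_{ℝ³} ρ(x) dx = 1, and its differential entropy equals −∫_{ℝ³} ρ(x) ln ρ(x) dx = 3 + ln π + 3 ln a₀. -/
open MeasureTheory Real Set

lemma aux_integrable_pow_exp (n : ℕ) {b : ℝ} (hb : 0 < b) :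
    IntegrableOn (fun y : ℝ => y ^ n * Real.exp (-(b * y))) (Ioi 0) := by
  have h := integrableOn_rpow_mul_exp_neg_mul_rpow (s := (n : ℝ)) (p := 1)
    (by exact_mod_cast neg_one_lt_zero.trans_le (Nat.cast_nonneg n)) one_pos hb
  refine h.congr_fun (fun x hx => ?_) measurableSet_Ioi
  beta_reduce
  rw [Real.rpow_natCast, Real.rpow_one, neg_mul]

lemma aux_int_pow_exp (n : ℕ) {b : ℝ} (hb : 0 < b) :
    ∫ y in Ioi (0:ℝ), y ^ n * Real.exp (-(b * y)) = (Nat.factorial n : ℝ) / b ^ (n + 1) := by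
  have h := Real.integral_rpow_mul_exp_neg_mul_Ioi (a := (n : ℝ) + 1) (r := b)
    (by positivity) hb
  rw [Real.Gamma_nat_eq_factorial] at h
  rw [show ((n : ℝ) + 1 - 1) = (n : ℝ) by ring,
    show ((n : ℝ) + 1) = ((n + 1 : ℕ) : ℝ) by push_cast; ring,
    Real.rpow_natCast] at h
  simp_rw [Real.rpow_natCast] at h
  rw [h, one_div, inv_pow]
  field_simp

lemma aux_radial (f : ℝ → ℝ) :
    ∫ x : EuclideanSpace ℝ (Fin 3), f ‖x‖ = (4 * π) * ∫ y in Ioi (0:ℝ), y ^ 2 * f y := by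
  have hΓ : Real.Gamma ((3:ℝ) / 2 + 1) = 3 / 4 * Real.sqrt π := by
    rw [Real.Gamma_add_one (by norm_num), show (3:ℝ)/2 = 1/2 + 1 by norm_num,
      Real.Gamma_add_one (by norm_num), Real.Gamma_one_half_eq]
    ring
  have hball : ((volume (Metric.ball (0 : EuclideanSpace ℝ (Fin 3)) 1)).toReal) = 4 * π / 3 := by
    rw [EuclideanSpace.volume_ball]
    simp only [Fintype.card_fin, Nat.cast_ofNat]
    rw [ENNReal.ofReal_one, one_pow, one_mul, hΓ,
      ENNReal.toReal_ofReal (by positivity)]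
    have h1 : Real.sqrt π ^ 3 = π * Real.sqrt π := by
      rw [pow_succ, sq_sqrt Real.pi_pos.le]
    have h2 : Real.sqrt π ≠ 0 := by positivity
    rw [h1]
    field_simp
  rw [MeasureTheory.integral_fun_norm_addHaar (volume : Measure (EuclideanSpace ℝ (Fin 3))) f]
  simp only [finrank_euclideanSpace_fin, measureReal_def, hball, nsmul_eq_mul, smul_eq_mul, Nat.cast_ofNat]
  norm_num
  ring

/-- The hydrogen ground-state position density `ρ(x) = (1/(πa₀³)) e^{−2‖x‖/a₀}` is a
probability density on ℝ³ and its differential entropy is `3 + ln π + 3 ln a₀`. -/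
theorem hydrogen_ground_state_entropy
    (a₀ : ℝ) (ha₀ : 0 < a₀)
    (ρ : EuclideanSpace ℝ (Fin 3) → ℝ)
    (hρ : ∀ x, ρ x = (1 / (π * a₀ ^ 3)) * Real.exp (-2 * ‖x‖ / a₀)) :
    (∀ x, 0 ≤ ρ x) ∧ (∫ x, ρ x = 1) ∧
    (-∫ x, ρ x * Real.log (ρ x) = 3 + Real.log π + 3 * Real.log a₀) := by
  have hπ := Real.pi_pos
  set b : ℝ := 2 / a₀ with hbdef
  set c : ℝ := 1 / (π * a₀ ^ 3) with hcdef
  have hb : 0 < b := by positivity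
  have hc : 0 < c := by positivity
  have hρ' : ∀ x : EuclideanSpace ℝ (Fin 3), ρ x = c * Real.exp (-(b * ‖x‖)) := by
    intro x
    rw [hρ x]
    congr 1
    rw [hbdef]
    field_simp
  have hI2 : ∫ y in Ioi (0:ℝ), y ^ 2 * Real.exp (-(b * y)) = 2 / b ^ 3 := by
    rw [aux_int_pow_exp 2 hb]; norm_num [Nat.factorial]
  have hI3 : ∫ y in Ioi (0:ℝ), y ^ 3 * Real.exp (-(b * y)) = 6 / b ^ 4 := by
    rw [aux_int_pow_exp 3 hb]; norm_num [Nat.factorial]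
  have hnonneg : ∀ x, 0 ≤ ρ x := by
    intro x; rw [hρ' x]; positivity
  have hb3 : b ^ 3 = 8 / a₀ ^ 3 := by rw [hbdef]; field_simp; ring
  have hb4 : b ^ 4 = 16 / a₀ ^ 4 := by rw [hbdef]; field_simp; ring
  have hmass : ∫ x, ρ x = 1 := by
    have h1 : (fun x : EuclideanSpace ℝ (Fin 3) => ρ x)
        = fun x => (fun y : ℝ => c * Real.exp (-(b * y))) ‖x‖ := by
      funext x; exact hρ' x
    have h2 := aux_radial (fun y : ℝ => c * Real.exp (-(b * y)))
    rw [h1, h2]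
    have h3 : (fun y : ℝ => y ^ 2 * (c * Real.exp (-(b * y))))
        = fun y : ℝ => c * (y ^ 2 * Real.exp (-(b * y))) := by funext y; ring
    rw [h3, integral_const_mul, hI2, hb3, hcdef]
    field_simp
    ring
  refine ⟨hnonneg, hmass, ?_⟩
  have hlog : ∀ x : EuclideanSpace ℝ (Fin 3),
      Real.log (ρ x) = Real.log c + (-(b * ‖x‖)) := by
    intro x
    rw [hρ' x, Real.log_mul hc.ne' (Real.exp_ne_zero _), Real.log_exp]
  have hent : (fun x : EuclideanSpace ℝ (Fin 3) => ρ x * Real.log (ρ x))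
      = fun x => (fun y : ℝ => c * Real.exp (-(b * y)) * (Real.log c + (-(b * y)))) ‖x‖ := by
    funext x; rw [hlog x, hρ' x]
  have hsplit : ∫ y in Ioi (0:ℝ),
      y ^ 2 * (c * Real.exp (-(b * y)) * (Real.log c + (-(b * y))))
      = (c * Real.log c) * (2 / b ^ 3) - (c * b) * (6 / b ^ 4) := by
    have h2 := (aux_integrable_pow_exp 2 hb).const_mul (c * Real.log c)
    have h3 := (aux_integrable_pow_exp 3 hb).const_mul (c * b)
    have heq : (fun y : ℝ => y ^ 2 * (c * Real.exp (-(b * y)) * (Real.log c + (-(b * y)))))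
        = fun y : ℝ => (c * Real.log c) * (y ^ 2 * Real.exp (-(b * y)))
            - (c * b) * (y ^ 3 * Real.exp (-(b * y))) := by
      funext y; ring
    rw [heq, integral_sub h2 h3, integral_const_mul, integral_const_mul, hI2, hI3]
  have hlogc : Real.log c = -(Real.log π + 3 * Real.log a₀) := by
    rw [hcdef, one_div, Real.log_inv, Real.log_mul hπ.ne' (by positivity),
      Real.log_pow]
    push_cast; ring
  have hrad := aux_radial (fun y : ℝ => c * Real.exp (-(b * y)) * (Real.log c + (-(b * y))))
  rw [hent, hrad, hsplit, hlogc, hb3, hb4, hcdef, hbdef]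
  field_simp
  ring
end
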